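/- If U and V are finite-dimensional vector subspaces of ℝ^d with dim(U) = dim(V), then the largest principal angle between U and V equals the largest principal angle between V and U, i.e. ∠(U,V) = ∠(V,U), where ∠(U,V) = max over unit u ∈ U of min over unit v ∈ V of the angle between u and v. -/

import Mathlib

open RealInnerProductSpace

/-- The largest principal angle between two subspaces `U` and `V` of `ℝ^d`:
`arccos` of the infimum over unit `u ∈ U` of the supremum over unit `v ∈ V`
of `⟪u, v⟫`. -/
noncomputable def subspaceAngle {d : ℕ} (U V : Submodule ℝ (EuclideanSpace ℝ (Fin d))) : ℝ :=
  Real.arccos (sInf {c : ℝ | ∃ u ∈ U, ‖u‖ = 1 ∧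
    c = sSup {s : ℝ | ∃ v ∈ V, ‖v‖ = 1 ∧ s = ⟪u, v⟫}})

section Abstract

variable {E : Type*} [NormedAddCommGroup E] [InnerProductSpace ℝ E] [FiniteDimensional ℝ E]
variable {F : Type*} [NormedAddCommGroup F] [InnerProductSpace ℝ F] [FiniteDimensional ℝ F]

/-- Rayleigh-type infimum for `T* T`. -/
noncomputable def rayInf (T : E →ₗ[ℝ] F) : ℝ :=
  ⨅ x : {x : E // x ≠ 0}, ⟪T x.1, T x.1⟫ / ‖(x.1 : E)‖ ^ 2

lemma inner_comp_adjoint (T : E →ₗ[ℝ] F) (x y : E) :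
    ⟪(LinearMap.adjoint T ∘ₗ T) x, y⟫ = ⟪T x, T y⟫ := by
  simp [LinearMap.adjoint_inner_left]

lemma isSymmetric_adjoint_comp (T : E →ₗ[ℝ] F) :
    (LinearMap.adjoint T ∘ₗ T).IsSymmetric := by
  intro x y
  rw [inner_comp_adjoint]
  rw [LinearMap.comp_apply, LinearMap.adjoint_inner_right]

lemma rayInf_bddBelow (T : E →ₗ[ℝ] F) :
    BddBelow (Set.range fun x : {x : E // x ≠ 0} => ⟪T x.1, T x.1⟫ / ‖(x.1 : E)‖ ^ 2) := by
  refine ⟨0, ?_⟩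
  rintro _ ⟨x, rfl⟩
  have := real_inner_self_nonneg (x := T x.1)
  positivity

lemma rayInf_le_of_hasEigenvalue {T : E →ₗ[ℝ] F} {μ : ℝ}
    (h : Module.End.HasEigenvalue (LinearMap.adjoint T ∘ₗ T) μ) : rayInf T ≤ μ := by
  obtain ⟨x, hx⟩ := h.exists_hasEigenvector
  have hx0 : x ≠ 0 := hx.2
  have hxe : (LinearMap.adjoint T ∘ₗ T) x = μ • x := hx.apply_eq_smul
  have key : ⟪T x, T x⟫ / ‖x‖ ^ 2 = μ := by
    have hn : ‖x‖ ≠ 0 := norm_ne_zero_iff.mpr hx0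
    rw [← inner_comp_adjoint, hxe, real_inner_smul_left, real_inner_self_eq_norm_sq]
    field_simp
  calc rayInf T ≤ ⟪T x, T x⟫ / ‖x‖ ^ 2 := ciInf_le (rayInf_bddBelow T) ⟨x, hx0⟩
    _ = μ := key

lemma hasEigenvalue_rayInf [Nontrivial E] (T : E →ₗ[ℝ] F) :
    Module.End.HasEigenvalue (LinearMap.adjoint T ∘ₗ T) (rayInf T) := by
  have := (isSymmetric_adjoint_comp T).hasEigenvalue_iInf_of_finiteDimensional
  convert this using 2
  · rfl
  unfold rayInf
  congr 1
  ext x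
  rw [inner_comp_adjoint]
  norm_num

/-- transfer an eigenvalue of `T* T` to one of `T T*`, given equal dimensions. -/
lemma hasEigenvalue_transfer {T : E →ₗ[ℝ] F}
    (hrank : Module.finrank ℝ E = Module.finrank ℝ F) {μ : ℝ}
    (h : Module.End.HasEigenvalue (LinearMap.adjoint T ∘ₗ T) μ) :
    Module.End.HasEigenvalue (T ∘ₗ LinearMap.adjoint T) μ := by
  obtain ⟨x, hx⟩ := h.exists_hasEigenvector
  have hx0 : x ≠ 0 := hx.2
  have hxe : LinearMap.adjoint T (T x) = μ • x := hx.apply_eq_smul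
  rcases eq_or_ne μ 0 with rfl | hμ
  · -- zero eigenvalue case
    have hTx : T x = 0 := by
      have : ⟪T x, T x⟫ = 0 := by
        rw [← LinearMap.adjoint_inner_right T, hxe]; simp
      exact inner_self_eq_zero.mp this
    have hker : LinearMap.ker T ≠ ⊥ := by
      intro hbot
      exact hx0 (by simpa [hbot] using (LinearMap.mem_ker.mpr hTx))
    have hrange : LinearMap.range T ≠ ⊤ := by
      intro htop
      have h1 := LinearMap.finrank_range_add_finrank_ker T
      have h2 : 0 < Module.finrank ℝ (LinearMap.ker T) := by
        rw [Module.finrank_pos_iff]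
        exact Submodule.nontrivial_iff_ne_bot.mpr hker
      rw [htop, finrank_top] at h1
      omega
    have horth : (LinearMap.range T)ᗮ ≠ ⊥ :=
      fun hb => hrange (Submodule.orthogonal_eq_bot_iff.mp hb)
    obtain ⟨v, hv, hv0⟩ := Submodule.exists_mem_ne_zero_of_ne_bot horth
    refine Module.End.hasEigenvalue_of_hasEigenvector (x := v) ⟨?_, hv0⟩
    rw [Module.End.mem_eigenspace_iff]
    have hTv : LinearMap.adjoint T v = 0 := by
      have : ⟪LinearMap.adjoint T v, LinearMap.adjoint T v⟫ = 0 := by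
        rw [LinearMap.adjoint_inner_left]
        rw [real_inner_comm]
        exact (Submodule.mem_orthogonal _ v).mp hv _ (LinearMap.mem_range_self T _)
      exact inner_self_eq_zero.mp this
    simp [hTv]
  · -- nonzero eigenvalue case
    refine Module.End.hasEigenvalue_of_hasEigenvector (x := T x) ⟨?_, ?_⟩
    · rw [Module.End.mem_eigenspace_iff, LinearMap.comp_apply, hxe, map_smul]
    · intro h0
      apply hx0
      have := hxe
      rw [h0, map_zero] at this
      have := this.symm
      rcases smul_eq_zero.mp this with h | h
      · exact absurd h hμ
      · exact h

lemma rayInf_eq_rayInf_adjoint [Nontrivial E] [Nontrivial F] (T : E →ₗ[ℝ] F)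
    (hrank : Module.finrank ℝ E = Module.finrank ℝ F) :
    rayInf T = rayInf (LinearMap.adjoint T) := by
  apply le_antisymm
  · have h1 := hasEigenvalue_rayInf (LinearMap.adjoint T)
    have h2 := hasEigenvalue_transfer (T := LinearMap.adjoint T) hrank.symm h1
    rw [LinearMap.adjoint_adjoint] at h2
    exact rayInf_le_of_hasEigenvalue h2
  · have h1 := hasEigenvalue_rayInf T
    have h2 := hasEigenvalue_transfer hrank h1
    have h3 : Module.End.HasEigenvalue
        (LinearMap.adjoint (LinearMap.adjoint T) ∘ₗ LinearMap.adjoint T) (rayInf T) := by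
      rwa [LinearMap.adjoint_adjoint]
    exact rayInf_le_of_hasEigenvalue h3

end Abstract

section Euclidean

variable {d : ℕ} (U V : Submodule ℝ (EuclideanSpace ℝ (Fin d)))

/-- The projection-to-`V` map restricted to `U`. -/
noncomputable def projMap : U →ₗ[ℝ] V :=
  (Submodule.orthogonalProjection V).toLinearMap ∘ₗ U.subtype

lemma inner_proj_eq (x w : EuclideanSpace ℝ (Fin d)) (hw : w ∈ V) :
    ⟪(Submodule.orthogonalProjection V x : EuclideanSpace ℝ (Fin d)), w⟫ = ⟪x, w⟫ := by
  have h : ⟪x - (Submodule.orthogonalProjection V x : EuclideanSpace ℝ (Fin d)), w⟫ = 0 :=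
    V.starProjection_inner_eq_zero x w hw
  rw [inner_sub_left] at h
  linarith

lemma adjoint_projMap : LinearMap.adjoint (projMap U V) = projMap V U := by
  symm
  rw [LinearMap.eq_adjoint_iff]
  intro x y
  simp only [projMap, LinearMap.comp_apply, Submodule.subtype_apply, Submodule.coe_inner,
    ContinuousLinearMap.coe_coe]
  rw [inner_proj_eq U (x : EuclideanSpace ℝ (Fin d)) (y : EuclideanSpace ℝ (Fin d)) y.2,
    real_inner_comm]
  exact ((real_inner_comm _ _).trans
    (inner_proj_eq V (y : EuclideanSpace ℝ (Fin d)) (x : EuclideanSpace ℝ (Fin d)) x.2)).symm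

lemma exists_norm_one (hV : V ≠ ⊥) : ∃ v ∈ V, ‖v‖ = 1 := by
  obtain ⟨x, hx, hx0⟩ := Submodule.exists_mem_ne_zero_of_ne_bot hV
  refine ⟨‖x‖⁻¹ • x, V.smul_mem _ hx, ?_⟩
  rw [norm_smul, norm_inv, norm_norm, inv_mul_cancel₀ (norm_ne_zero_iff.mpr hx0)]

lemma sSup_inner_eq (hV : V ≠ ⊥) (u : EuclideanSpace ℝ (Fin d)) :
    sSup {s : ℝ | ∃ v ∈ V, ‖v‖ = 1 ∧ s = ⟪u, v⟫} =
      ‖(Submodule.orthogonalProjection V u : EuclideanSpace ℝ (Fin d))‖ := by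
  set p : EuclideanSpace ℝ (Fin d) := (Submodule.orthogonalProjection V u : EuclideanSpace ℝ (Fin d))
    with hp
  have hpV : p ∈ V := Submodule.coe_mem _
  apply IsGreatest.csSup_eq
  constructor
  · -- ‖p‖ is in the set
    rcases eq_or_ne p 0 with h0 | h0
    · obtain ⟨v, hv, hv1⟩ := exists_norm_one V hV
      refine ⟨v, hv, hv1, ?_⟩
      rw [h0, norm_zero, ← inner_proj_eq V u v hv, ← hp, h0, inner_zero_left]
    · refine ⟨‖p‖⁻¹ • p, V.smul_mem _ hpV, ?_, ?_⟩
      · rw [norm_smul, norm_inv, norm_norm, inv_mul_cancel₀ (norm_ne_zero_iff.mpr h0)]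
      · rw [real_inner_smul_right, ← inner_proj_eq V u p hpV, ← hp,
          real_inner_self_eq_norm_sq]
        have hn : ‖p‖ ≠ 0 := norm_ne_zero_iff.mpr h0
        field_simp
  · rintro s ⟨v, hv, hv1, rfl⟩
    calc ⟪u, v⟫ = ⟪p, v⟫ := (inner_proj_eq V u v hv).symm
      _ ≤ ‖p‖ * ‖v‖ := real_inner_le_norm _ _
      _ = ‖p‖ := by rw [hv1, mul_one]

lemma angle_set_eq (hV : V ≠ ⊥) :
    {c : ℝ | ∃ u ∈ U, ‖u‖ = 1 ∧ c = sSup {s : ℝ | ∃ v ∈ V, ‖v‖ = 1 ∧ s = ⟪u, v⟫}} =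
      {c : ℝ | ∃ u ∈ U, ‖u‖ = 1 ∧
        c = ‖(Submodule.orthogonalProjection V u : EuclideanSpace ℝ (Fin d))‖} := by
  ext c
  constructor
  · rintro ⟨u, hu, hu1, rfl⟩
    exact ⟨u, hu, hu1, sSup_inner_eq V hV u⟩
  · rintro ⟨u, hu, hu1, rfl⟩
    exact ⟨u, hu, hu1, (sSup_inner_eq V hV u).symm⟩

set_option maxHeartbeats 2000000 in
lemma sInf_eq_sqrt_rayInf (hU : U ≠ ⊥) :
    sInf {c : ℝ | ∃ u ∈ U, ‖u‖ = 1 ∧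
        c = ‖(Submodule.orthogonalProjection V u : EuclideanSpace ℝ (Fin d))‖} =
      Real.sqrt (rayInf (projMap U V)) := by
  classical
  set f : U → ℝ := fun x => ‖(Submodule.orthogonalProjection V (x : EuclideanSpace ℝ (Fin d)) :
    EuclideanSpace ℝ (Fin d))‖ with hf_def
  have hf : Continuous f :=
    continuous_norm.comp (continuous_subtype_val.comp
      ((Submodule.orthogonalProjection V).continuous.comp continuous_subtype_val))
  obtain ⟨u₁, hu₁, hu₁n⟩ := exists_norm_one U hU
  have hsne : (Metric.sphere (0 : U) 1).Nonempty := by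
    refine ⟨⟨u₁, hu₁⟩, ?_⟩
    rw [mem_sphere_zero_iff_norm]
    simpa using hu₁n
  obtain ⟨x₀, hx₀s, hmin⟩ :=
    (isCompact_sphere (0 : U) 1).exists_isMinOn hsne hf.continuousOn
  have hx₀n : ‖x₀‖ = 1 := mem_sphere_zero_iff_norm.mp hx₀s
  have hx₀0 : x₀ ≠ 0 := by
    intro h
    rw [h, norm_zero] at hx₀n
    norm_num at hx₀n
  have hproj : ∀ x : U, ‖projMap U V x‖ = f x := by
    intro x
    simp [projMap, f]
  have hIsLeast : IsLeast {c : ℝ | ∃ u ∈ U, ‖u‖ = 1 ∧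
      c = ‖(Submodule.orthogonalProjection V u : EuclideanSpace ℝ (Fin d))‖} (f x₀) := by
    constructor
    · exact ⟨(x₀ : EuclideanSpace ℝ (Fin d)), x₀.2, by simpa using hx₀n, rfl⟩
    · rintro c ⟨u, hu, hu1, rfl⟩
      have hmem : (⟨u, hu⟩ : U) ∈ Metric.sphere (0 : U) 1 := by
        rw [mem_sphere_zero_iff_norm]
        simpa using hu1
      have h := isMinOn_iff.mp hmin ⟨u, hu⟩ hmem
      exact h
  rw [hIsLeast.csInf_eq]
  have hu₁0 : (⟨u₁, hu₁⟩ : U) ≠ 0 := by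
    have h1 : ‖(⟨u₁, hu₁⟩ : U)‖ = 1 := by simpa using hu₁n
    intro hcon
    rw [hcon, norm_zero] at h1
    norm_num at h1
  haveI : Nonempty {x : ↥U // x ≠ 0} := ⟨⟨⟨u₁, hu₁⟩, hu₁0⟩⟩
  have hray : rayInf (projMap U V) = (f x₀) ^ 2 := by
    apply le_antisymm
    · have hle := ciInf_le (rayInf_bddBelow (projMap U V)) ⟨x₀, hx₀0⟩
      calc rayInf (projMap U V)
          ≤ ⟪projMap U V x₀, projMap U V x₀⟫ / ‖x₀‖ ^ 2 := hle
        _ = (f x₀) ^ 2 := by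
            rw [real_inner_self_eq_norm_sq, hproj, hx₀n]
            norm_num
    · refine le_ciInf fun x => ?_
      have hxn : ‖x.1‖ ≠ 0 := norm_ne_zero_iff.mpr x.2
      set y : U := ‖x.1‖⁻¹ • x.1 with hy_def
      have hymem : y ∈ Metric.sphere (0 : U) 1 := by
        rw [mem_sphere_zero_iff_norm, hy_def, norm_smul, norm_inv, norm_norm,
          inv_mul_cancel₀ hxn]
      have h1 : f x₀ ≤ f y := isMinOn_iff.mp hmin y hymem
      have h2 : f y = ‖x.1‖⁻¹ * f x.1 := by
        simp only [f, hy_def, Submodule.coe_smul, map_smul, Submodule.coe_smul, norm_smul,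
          norm_inv, norm_norm]
      have h3 : (f x₀) ^ 2 ≤ (f y) ^ 2 := by
        have := norm_nonneg (Submodule.orthogonalProjection V (x₀ : EuclideanSpace ℝ (Fin d)) :
          EuclideanSpace ℝ (Fin d))
        exact pow_le_pow_left₀ this h1 2
      calc (f x₀) ^ 2 ≤ (f y) ^ 2 := h3
        _ = ⟪projMap U V x.1, projMap U V x.1⟫ / ‖x.1‖ ^ 2 := by
            rw [h2, real_inner_self_eq_norm_sq, hproj, mul_pow, inv_pow]
            rw [inv_mul_eq_div]
  rw [hray, Real.sqrt_sq (norm_nonneg _)]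

end Euclidean

theorem subspaceAngle_symm_of_finrank_eq {d : ℕ}
    (U V : Submodule ℝ (EuclideanSpace ℝ (Fin d)))
    (h : Module.finrank ℝ U = Module.finrank ℝ V) :
    subspaceAngle U V = subspaceAngle V U := by
  rcases eq_or_ne U ⊥ with rfl | hU
  · have hV : V = ⊥ := by
      have h0 : Module.finrank ℝ V = 0 := by simpa using h.symm
      exact Submodule.finrank_eq_zero.mp h0
    rw [hV]
  · have hV : V ≠ ⊥ := by
      intro hbot
      apply hU
      rw [hbot] at h
      have h0 : Module.finrank ℝ U = 0 := by simpa using h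
      exact Submodule.finrank_eq_zero.mp h0
    unfold subspaceAngle
    congr 1
    rw [angle_set_eq U V hV, angle_set_eq V U hU,
      sInf_eq_sqrt_rayInf U V hU, sInf_eq_sqrt_rayInf V U hV]
    congr 1
    haveI : Nontrivial U := Submodule.nontrivial_iff_ne_bot.mpr hU
    haveI : Nontrivial V := Submodule.nontrivial_iff_ne_bot.mpr hV
    have heq := rayInf_eq_rayInf_adjoint (projMap U V) h
    rw [adjoint_projMap] at heq
    exact heq
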